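/- Let Ω be a nonempty open subset of ℝⁿ, M ≥ 1, γ(t) = M·t for t ∈ ℂ. If f ∈ C^∞(Ω)^{[γ,V]} is of order ≤ k and ξ ∈ C^∞(Ω) satisfies ∂^α ξ(x) = 0 for all multi-indices α with |α| ≤ k and all x ∈ supp f, then f(ξ) = 0. -/

import Mathlib

open Topology Filter Set

noncomputable section

abbrev Rn (n : ℕ) : Type := EuclideanSpace ℝ (Fin n)

/-- The model of `C^∞(Ω)`: functions smooth on `Ω` and vanishing outside `Ω`. -/
def cinfSubmodule (n : ℕ) (Ω : Set (Rn n)) : Submodule ℂ (Rn n → ℂ) where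
  carrier := {g | ContDiffOn ℝ (⊤ : ℕ∞) g Ω ∧ ∀ x ∉ Ω, g x = 0}
  add_mem' := by
    rintro g h ⟨hg1, hg2⟩ ⟨hh1, hh2⟩
    refine ⟨hg1.add hh1, fun x hx => ?_⟩
    simp [Pi.add_apply, hg2 x hx, hh2 x hx]
  zero_mem' := ⟨contDiffOn_const, fun _ _ => rfl⟩
  smul_mem' := by
    rintro c g ⟨hg1, hg2⟩
    refine ⟨hg1.const_smul c, fun x hx => ?_⟩
    simp [hg2 x hx]

/-- The model of the test-function space `C₀^∞(Ω)`. -/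
def testSubmodule (n : ℕ) (Ω : Set (Rn n)) : Submodule ℂ (Rn n → ℂ) where
  carrier := {g | ContDiffOn ℝ (⊤ : ℕ∞) g Ω ∧ (∀ x ∉ Ω, g x = 0) ∧
    IsCompact (tsupport g) ∧ tsupport g ⊆ Ω}
  add_mem' := by
    rintro g h ⟨hg1, hg2, hg3, hg4⟩ ⟨hh1, hh2, hh3, hh4⟩
    have hsub : tsupport (g + h) ⊆ tsupport g ∪ tsupport h := tsupport_add g h
    exact ⟨hg1.add hh1, fun x hx => by simp [hg2 x hx, hh2 x hx],
      (hg3.union hh3).of_isClosed_subset (isClosed_tsupport _) hsub,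
      hsub.trans (union_subset hg4 hh4)⟩
  zero_mem' := by
    have h0 : tsupport (0 : Rn n → ℂ) = ∅ := by simp [tsupport]
    exact ⟨contDiffOn_const, fun _ _ => rfl, by rw [h0]; exact isCompact_empty,
      by rw [h0]; exact empty_subset Ω⟩
  smul_mem' := by
    rintro c g ⟨hg1, hg2, hg3, hg4⟩
    have hsub : tsupport (c • g) ⊆ tsupport g := by
      refine closure_mono fun x hx => ?_
      simp only [Function.mem_support, Pi.smul_apply, smul_eq_mul] at hx ⊢
      exact fun h => hx (by simp [h])
    exact ⟨hg1.const_smul c, fun x hx => by simp [hg2 x hx],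
      hg3.of_isClosed_subset (isClosed_tsupport _) hsub, hsub.trans hg4⟩

abbrev CInfOn (n : ℕ) (Ω : Set (Rn n)) : Type := ↥(cinfSubmodule n Ω)
abbrev TestFn (n : ℕ) (Ω : Set (Rn n)) : Type := ↥(testSubmodule n Ω)

/-- The natural inclusion of `C₀^∞(Ω)` into `C^∞(Ω)`. -/
def toCInf {n : ℕ} {Ω : Set (Rn n)} (ξ : TestFn n Ω) : CInfOn n Ω :=
  ⟨ξ.val, ξ.2.1, ξ.2.2.1⟩

/-- The family of compact subsets of `Ω`. -/
def cptsIn (n : ℕ) (Ω : Set (Rn n)) : Set (Set (Rn n)) := {K | IsCompact K ∧ K ⊆ Ω}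

/-- The family of all iterated derivatives (within `Ω`) of a function, seen as elements of
spaces of uniform convergence on compact subsets of `Ω`. -/
def derivsMap (n : ℕ) (Ω : Set (Rn n)) (g : Rn n → ℂ) :
    (k : ℕ) → UniformOnFun (Rn n) (ContinuousMultilinearMap ℝ (fun _ : Fin k => Rn n) ℂ)
      (cptsIn n Ω) :=
  fun k => (UniformOnFun.ofFun (cptsIn n Ω)) (iteratedFDerivWithin ℝ k g Ω)

/-- The Fréchet topology of `C^∞(Ω)`: uniform convergence of all derivatives on all compact
subsets of `Ω`. -/
instance (priority := 2000) instCInfTop (n : ℕ) (Ω : Set (Rn n)) :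
    TopologicalSpace (CInfOn n Ω) :=
  TopologicalSpace.induced (fun ξ => derivsMap n Ω ξ.val) inferInstance

/-- A candidate topology for the inductive limit topology on `C₀^∞(Ω)`: a locally convex
vector topology making all the inclusions `C^∞(K) → C₀^∞(Ω)` continuous, where `C^∞(K)`
(the test functions supported in the compact set `K ⊆ Ω`) carries the Fréchet topology. -/
def IsLFCandidate (n : ℕ) (Ω : Set (Rn n)) (t : TopologicalSpace (TestFn n Ω)) : Prop :=
  @IsTopologicalAddGroup (TestFn n Ω) t _ ∧
  @ContinuousSMul ℂ (TestFn n Ω) _ _ t ∧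
  @LocallyConvexSpace ℝ (TestFn n Ω) _ _ _ _ t ∧
  ∀ K : Set (Rn n), IsCompact K → K ⊆ Ω →
    @Continuous {ξ : TestFn n Ω // tsupport ξ.val ⊆ K} (TestFn n Ω)
      (TopologicalSpace.induced (fun ζ => derivsMap n Ω ζ.val.val) inferInstance) t
      Subtype.val

/-- The usual inductive limit (LF) topology of `C₀^∞(Ω)`: the finest locally convex vector
topology making all inclusions `C^∞(K) → C₀^∞(Ω)` continuous. -/
instance (priority := 2000) instTestTop (n : ℕ) (Ω : Set (Rn n)) :
    TopologicalSpace (TestFn n Ω) :=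
  sSup {t | IsLFCandidate n Ω t}

/-- The family `C(0)` of the paper. -/
def CzeroFam (γ : ℂ → ℂ) : Prop :=
  Tendsto γ (𝓝 0) (𝓝 0) ∧ γ 0 = 0 ∧ ∀ t : ℂ, ‖t‖ ≤ 1 → ‖t‖ ≤ ‖γ t‖

/-- The family `𝓛_{γ,U}(X, Y)` of demi-linear maps. -/
def DemiL {X Y : Type*} [AddCommGroup X] [Module ℂ X] [AddCommGroup Y] [Module ℂ Y]
    (γ : ℂ → ℂ) (U : Set X) (f : X → Y) : Prop :=
  f 0 = 0 ∧ ∀ x : X, ∀ u ∈ U, ∀ t : ℂ, ‖t‖ ≤ 1 →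
    ∃ r s : ℂ, ‖r - 1‖ ≤ ‖γ t‖ ∧ ‖s‖ ≤ ‖γ t‖ ∧ f (x + t • u) = r • f x + s • f u

/-- The family `𝓚_{γ,U}(X, ℂ)`. -/
def DemiK {X : Type*} [AddCommGroup X] [Module ℂ X]
    (γ : ℂ → ℂ) (U : Set X) (f : X → ℂ) : Prop :=
  f 0 = 0 ∧ ∀ x : X, ∀ u ∈ U, ∀ t : ℂ, ‖t‖ ≤ 1 →
    ∃ s : ℂ, ‖s‖ ≤ ‖γ t‖ ∧ f (x + t • u) = f x + s * f u

/-- `supp ξ = closure {x ∈ Ω : ξ x ≠ 0} ∩ Ω`. -/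
def suppFun {n : ℕ} (Ω : Set (Rn n)) (g : Rn n → ℂ) : Set (Rn n) :=
  closure {x | x ∈ Ω ∧ g x ≠ 0} ∩ Ω

/-- The support of a functional `f` defined on a set `S` of functions on `Ω`. -/
def fsupp {n : ℕ} {S : Type*} (Ω : Set (Rn n)) (coeF : S → (Rn n → ℂ)) (f : S → ℂ) :
    Set (Rn n) :=
  {x | x ∈ Ω ∧ ∀ G : Set (Rn n), IsOpen G → G ⊆ Ω → x ∈ G →
    ∃ ξ : S, suppFun Ω (coeF ξ) ⊆ G ∧ f ξ ≠ 0}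

/-- `Σ_{|α| ≤ k} sup_K |∂^α g|`, expressed via iterated Fréchet derivatives within `Ω`. -/
def pnorm {n : ℕ} (Ω K : Set (Rn n)) (k : ℕ) (g : Rn n → ℂ) : ℝ :=
  ∑ i ∈ Finset.range (k + 1), ⨆ x ∈ K, ‖iteratedFDerivWithin ℝ i g Ω x‖

/-- Condition (1.1) of the paper. -/
def Cond11 {n : ℕ} (Ω : Set (Rn n)) (f : TestFn n Ω → ℂ) : Prop :=
  ∀ K : Set (Rn n), IsCompact K → K ⊆ Ω → ∃ C > 0, ∃ k : ℕ,
    ∀ ξ : TestFn n Ω, suppFun Ω ξ.val ⊆ K → ‖f ξ‖ ≤ C * pnorm Ω K k ξ.val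

/-- Pointwise multiplication of a test function and a smooth function, a test function. -/
def mulTest {n : ℕ} {Ω : Set (Rn n)} (𝒳 : TestFn n Ω) (ξ : CInfOn n Ω) : TestFn n Ω := by
  refine ⟨fun x => 𝒳.val x * ξ.val x, ?_⟩
  obtain ⟨hs, hz, hc, hsubΩ⟩ := 𝒳.2
  obtain ⟨hs', hz'⟩ := ξ.2
  have hsupp : tsupport (fun x => 𝒳.val x * ξ.val x) ⊆ tsupport (𝒳.val : Rn n → ℂ) :=
    tsupport_mul_subset_left
  exact ⟨hs.mul hs', fun x hx => by show 𝒳.val x * ξ.val x = 0; rw [hz x hx, zero_mul],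
    hc.of_isClosed_subset (isClosed_tsupport _) hsupp, hsupp.trans hsubΩ⟩

open scoped Classical in
/-- The canonical extension of a functional on `C₀^∞(Ω)` to smooth functions, defined via
`f`-decompositions `ξ = ξ₀ + ξ₁` with `ξ₀ ∈ C₀^∞(Ω)` and `supp ξ₁ ∩ supp f = ∅`. -/
def canonExt {n : ℕ} {Ω : Set (Rn n)} (f : TestFn n Ω → ℂ) (ξ : CInfOn n Ω) : ℂ :=
  if h : ∃ ξ₀ : TestFn n Ω, suppFun Ω (ξ.val - ξ₀.val) ∩ fsupp Ω Subtype.val f = ∅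
  then f h.choose else 0

end
noncomputable section
open MeasureTheory Metric
open scoped Convolution

theorem natle' (j : ℕ) : (j : WithTop ℕ∞) ≤ ((⊤:ℕ∞) : WithTop ℕ∞) := by exact_mod_cast le_top

theorem lsmul_precompR (E : Type) [NormedAddCommGroup E] [NormedSpace ℝ E] (n : ℕ) :
    (ContinuousLinearMap.lsmul ℝ ℝ : ℝ →L[ℝ] E →L[ℝ] E).precompR (Rn n) =
      (ContinuousLinearMap.lsmul ℝ ℝ : ℝ →L[ℝ] (Rn n →L[ℝ] E) →L[ℝ] (Rn n →L[ℝ] E)) := by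
  ext c T v
  simp [ContinuousLinearMap.precompR]

theorem conv_bound (n : ℕ) (j : ℕ) : ∀ (E : Type) [NormedAddCommGroup E] [NormedSpace ℝ E],
    ∀ (w : Rn n → ℝ), LocallyIntegrable w volume → (∀ y, ‖w y‖ ≤ 1) →
    ∀ (g : Rn n → E), ContDiff ℝ (⊤ : ℕ∞) g → HasCompactSupport g →
    ∀ x : Rn n, ‖iteratedFDeriv ℝ j (w ⋆[ContinuousLinearMap.lsmul ℝ ℝ, volume] g) x‖ ≤
      ∫ y, ‖iteratedFDeriv ℝ j g y‖ := by
  induction j with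
  | zero =>
    intro E _ _ w hw hwb g hg hcs x
    rw [norm_iteratedFDeriv_zero]
    have hgi : Integrable (fun y => ‖g (x - y)‖) volume :=
      ((hg.continuous.integrable_of_hasCompactSupport hcs).comp_sub_left x).norm
    calc ‖(w ⋆[ContinuousLinearMap.lsmul ℝ ℝ, volume] g) x‖
        ≤ ∫ y, ‖(ContinuousLinearMap.lsmul ℝ ℝ) (w y) (g (x - y))‖ :=
          norm_integral_le_integral_norm _
      _ ≤ ∫ y, ‖g (x - y)‖ := by
          refine integral_mono_of_nonneg (Eventually.of_forall fun y => norm_nonneg _) hgi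
            (Eventually.of_forall fun y => ?_)
          simp only [ContinuousLinearMap.lsmul_apply, norm_smul]
          calc ‖w y‖ * ‖g (x - y)‖ ≤ 1 * ‖g (x - y)‖ :=
            mul_le_mul_of_nonneg_right (hwb y) (norm_nonneg _)
          _ = ‖g (x - y)‖ := one_mul _
      _ = ∫ y, ‖g y‖ := integral_sub_left_eq_self (fun y => ‖g y‖) volume x
      _ = ∫ y, ‖iteratedFDeriv ℝ 0 g y‖ := by simp [norm_iteratedFDeriv_zero]
  | succ j ih =>
    intro E _ _ w hw hwb g hg hcs x
    have hg1 : ContDiff ℝ 1 g := hg.of_le (by exact_mod_cast le_top)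
    have hder : ∀ x₀ : Rn n, HasFDerivAt (w ⋆[ContinuousLinearMap.lsmul ℝ ℝ, volume] g)
        ((w ⋆[(ContinuousLinearMap.lsmul ℝ ℝ : ℝ →L[ℝ] E →L[ℝ] E).precompR (Rn n), volume]
          fderiv ℝ g) x₀) x₀ :=
      fun x₀ => hcs.hasFDerivAt_convolution_right _ hw hg1 x₀
    have hfd : fderiv ℝ (w ⋆[ContinuousLinearMap.lsmul ℝ ℝ, volume] g) =
        (w ⋆[ContinuousLinearMap.lsmul ℝ ℝ, volume] fderiv ℝ g) := by
      funext x₀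
      rw [(hder x₀).fderiv, lsmul_precompR]
    calc ‖iteratedFDeriv ℝ (j + 1) (w ⋆[ContinuousLinearMap.lsmul ℝ ℝ, volume] g) x‖
        = ‖iteratedFDeriv ℝ j (fderiv ℝ (w ⋆[ContinuousLinearMap.lsmul ℝ ℝ, volume] g)) x‖ :=
          (norm_iteratedFDeriv_fderiv).symm
      _ = ‖iteratedFDeriv ℝ j (w ⋆[ContinuousLinearMap.lsmul ℝ ℝ, volume] fderiv ℝ g) x‖ := by
          rw [hfd]
      _ ≤ ∫ y, ‖iteratedFDeriv ℝ j (fderiv ℝ g) y‖ :=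
          ih _ w hw hwb (fderiv ℝ g) (hg.fderiv_right (by norm_num)) (hcs.fderiv ℝ) x
      _ = ∫ y, ‖iteratedFDeriv ℝ (j + 1) g y‖ := by
          congr 1; funext y; exact norm_iteratedFDeriv_fderiv

theorem whitney (n k : ℕ) : ∃ I : ℝ, 0 < I ∧ ∀ (F₀ : Set (Rn n)) (ε : ℝ), 0 < ε →
    ∃ χ : Rn n → ℝ, ContDiff ℝ (⊤ : ℕ∞) χ ∧
      (∀ x, infDist x F₀ ≤ ε → χ x = 1) ∧
      (∀ x, 3 * ε ≤ infDist x F₀ → χ x = 0) ∧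
      (∀ j ≤ k, ∀ x, ‖iteratedFDeriv ℝ j χ x‖ ≤ I / ε ^ j) := by
  set b : ContDiffBump (0 : Rn n) := ⟨1/2, 1, by norm_num, by norm_num⟩ with hb
  set φ : Rn n → ℝ := b.normed volume with hφ
  have hφc : ContDiff ℝ (⊤ : ℕ∞) φ := b.contDiff_normed
  have hφsupp : Function.support φ = ball (0 : Rn n) 1 := by
    rw [hφ, b.support_normed_eq]
  have hφcs : HasCompactSupport φ := b.hasCompactSupport_normed
  set I : ℝ := 1 + ∑ j ∈ Finset.range (k+1), ∫ y, ‖iteratedFDeriv ℝ j φ y‖ with hI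
  have hInn : ∀ j, 0 ≤ ∫ y, ‖iteratedFDeriv ℝ j φ y‖ :=
    fun j => integral_nonneg (fun y => norm_nonneg _)
  have hIpos : 0 < I := by
    have : 0 ≤ ∑ j ∈ Finset.range (k+1), ∫ y, ‖iteratedFDeriv ℝ j φ y‖ :=
      Finset.sum_nonneg fun j _ => hInn j
    linarith
  have hIj : ∀ j ≤ k, (∫ y, ‖iteratedFDeriv ℝ j φ y‖) ≤ I := by
    intro j hj
    have h1 : (∫ y, ‖iteratedFDeriv ℝ j φ y‖) ≤
        ∑ j ∈ Finset.range (k+1), ∫ y, ‖iteratedFDeriv ℝ j φ y‖ :=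
      Finset.single_le_sum (fun i _ => hInn i) (Finset.mem_range.2 (Nat.lt_succ_of_le hj))
    linarith
  refine ⟨I, hIpos, fun F₀ ε hε => ?_⟩
  set A : Set (Rn n) := {x | infDist x F₀ < 2*ε} with hA
  have hAopen : IsOpen A := isOpen_lt (continuous_infDist_pt _) continuous_const
  set w : Rn n → ℝ := A.indicator (fun _ => (1:ℝ)) with hw
  have hwloc : LocallyIntegrable w volume :=
    (locallyIntegrable_const 1).indicator hAopen.measurableSet
  have hwb : ∀ y, ‖w y‖ ≤ 1 := by
    intro y
    rw [hw]
    by_cases hy : y ∈ A <;> simp [Set.indicator_of_mem, Set.indicator_of_notMem, hy]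
  set ρ : Rn n → ℝ := fun x => (ε^n)⁻¹ • φ ((ε⁻¹ : ℝ) • x) with hρ
  have hρc : ContDiff ℝ (⊤ : ℕ∞) ρ :=
    (hφc.comp (contDiff_const_smul _)).const_smul _
  have hρsupp : ∀ z : Rn n, ε ≤ ‖z‖ → ρ z = 0 := by
    intro z hz
    have : φ ((ε⁻¹ : ℝ) • z) = 0 := by
      by_contra h
      have : (ε⁻¹ : ℝ) • z ∈ Function.support φ := h
      rw [hφsupp, mem_ball_zero_iff, norm_smul] at this
      rw [Real.norm_eq_abs, abs_of_pos (inv_pos.2 hε)] at this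
      have : ‖z‖ < ε := by
        have := (inv_mul_lt_iff₀ hε).1 this
        simpa [mul_comm] using this
      linarith
    simp [hρ, this]
  have hρcs : HasCompactSupport ρ := by
    apply HasCompactSupport.intro (isCompact_closedBall (0 : Rn n) ε)
    intro z hz
    exact hρsupp z (le_of_lt (by simpa [mem_closedBall, dist_zero_right] using hz))
  set χ : Rn n → ℝ := w ⋆[ContinuousLinearMap.lsmul ℝ ℝ, volume] ρ with hχ
  have hχc : ContDiff ℝ (⊤ : ℕ∞) χ := hρcs.contDiff_convolution_right _ hwloc hρc
  have hρint : ∫ y, ρ y = 1 := by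
    rw [hρ]
    have h1 : ∫ y : Rn n, (ε^n)⁻¹ • φ ((ε⁻¹ : ℝ) • y) = (ε^n)⁻¹ • ∫ y : Rn n, φ ((ε⁻¹ : ℝ) • y) :=
      integral_smul _ _
    rw [h1, Measure.integral_comp_smul volume φ (ε⁻¹ : ℝ)]
    have hfr : Module.finrank ℝ (Rn n) = n := finrank_euclideanSpace_fin
    rw [hfr, b.integral_normed]
    have : |((ε⁻¹ : ℝ) ^ n)⁻¹| = ε ^ n := by
      rw [← inv_pow, inv_inv, abs_of_pos (pow_pos hε n)]
    rw [this]
    simp [smul_eq_mul]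
    rw [inv_mul_cancel₀ (ne_of_gt (pow_pos hε n))]
  refine ⟨χ, hχc, ?_, ?_, ?_⟩
  · -- χ = 1 near F₀
    intro x hx
    have h1 : ∀ y, w y • ρ (x - y) = ρ (x - y) := by
      intro y
      by_cases hy : y ∈ A
      · rw [hw, Set.indicator_of_mem hy]; simp
      · have h2ε : 2*ε ≤ infDist y F₀ := not_lt.1 hy
        have : infDist y F₀ ≤ infDist x F₀ + dist y x := infDist_le_infDist_add_dist
        have hd : ε ≤ dist y x := by linarith
        have : ρ (x - y) = 0 := by
          apply hρsupp
          rw [← dist_eq_norm, dist_comm]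
          exact hd
        rw [this, smul_zero]
    calc χ x = ∫ y, w y • ρ (x - y) := by
          rw [hχ, convolution_def]; simp [ContinuousLinearMap.lsmul_apply]
      _ = ∫ y, ρ (x - y) := by congr 1; funext y; exact h1 y
      _ = ∫ y, ρ y := integral_sub_left_eq_self ρ volume x
      _ = 1 := hρint
  · -- χ = 0 far from F₀
    intro x hx
    have h1 : ∀ y, w y • ρ (x - y) = 0 := by
      intro y
      by_cases hy : y ∈ A
      · have h2ε : infDist y F₀ < 2*ε := hy
        have : infDist x F₀ ≤ infDist y F₀ + dist x y := infDist_le_infDist_add_dist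
        have hd : ε ≤ dist x y := by linarith
        have : ρ (x - y) = 0 := by
          apply hρsupp; rw [← dist_eq_norm]; exact hd
        rw [this, smul_zero]
      · rw [hw, Set.indicator_of_notMem hy, zero_smul]
    calc χ x = ∫ y, w y • ρ (x - y) := by
          rw [hχ, convolution_def]; simp [ContinuousLinearMap.lsmul_apply]
      _ = 0 := by rw [show (fun y => w y • ρ (x - y)) = fun _ => (0:ℝ) from funext h1]; simp
  · -- derivative bounds
    intro j hj x
    have hstep1 : ‖iteratedFDeriv ℝ j χ x‖ ≤ ∫ y, ‖iteratedFDeriv ℝ j ρ y‖ :=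
      conv_bound n j ℝ w hwloc hwb ρ hρc hρcs x
    -- now bound ∫ ‖D^j ρ‖
    set Lε : Rn n →L[ℝ] Rn n := (ε⁻¹ : ℝ) • ContinuousLinearMap.id ℝ (Rn n) with hLε
    have hLεnorm : ‖Lε‖ ≤ ε⁻¹ := by
      apply ContinuousLinearMap.opNorm_le_bound _ (le_of_lt (inv_pos.2 hε))
      intro v
      rw [hLε]
      simp only [ContinuousLinearMap.smul_apply, ContinuousLinearMap.id_apply, norm_smul,
        Real.norm_eq_abs, abs_of_pos (inv_pos.2 hε), le_refl]
    have hcomp : ∀ y : Rn n, φ ((ε⁻¹ : ℝ) • y) = (φ ∘ Lε) y := by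
      intro y; simp [hLε]
    have hρder : ∀ y : Rn n, ‖iteratedFDeriv ℝ j ρ y‖ ≤
        (ε^n)⁻¹ * ((ε⁻¹)^j * ‖iteratedFDeriv ℝ j φ ((ε⁻¹ : ℝ) • y)‖) := by
      intro y
      have hφLc : ContDiff ℝ ((⊤:ℕ∞) : WithTop ℕ∞) (φ ∘ ⇑Lε) := hφc.comp Lε.contDiff
      have h1 : iteratedFDeriv ℝ j ρ y = (ε^n)⁻¹ • iteratedFDeriv ℝ j (φ ∘ ⇑Lε) y := by
        have hρeq : ρ = (ε^n)⁻¹ • (φ ∘ ⇑Lε) := by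
          funext z
          rw [hρ]
          simp only [Pi.smul_apply]
          rw [hcomp z]
        rw [hρeq]
        exact iteratedFDeriv_const_smul_apply (hφLc.of_le (natle' j)).contDiffAt
      have h2 : iteratedFDeriv ℝ j (φ ∘ ⇑Lε) y =
          (iteratedFDeriv ℝ j φ (Lε y)).compContinuousLinearMap fun _ => Lε :=
        Lε.iteratedFDeriv_comp_right hφc y (natle' j)
      rw [h1, norm_smul, h2]
      have h3 : ‖(iteratedFDeriv ℝ j φ (Lε y)).compContinuousLinearMap fun _ => Lε‖ ≤
          ‖iteratedFDeriv ℝ j φ (Lε y)‖ * ∏ _i : Fin j, ‖Lε‖ :=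
        ContinuousMultilinearMap.norm_compContinuousLinearMap_le _ _
      have h4 : (∏ _i : Fin j, ‖Lε‖) ≤ (ε⁻¹)^j := by
        rw [Finset.prod_const]
        simp only [Finset.card_univ, Fintype.card_fin]
        exact pow_le_pow_left₀ (norm_nonneg _) hLεnorm j
      have h5 : ‖iteratedFDeriv ℝ j φ (Lε y)‖ * (∏ _i : Fin j, ‖Lε‖) ≤
          ‖iteratedFDeriv ℝ j φ (Lε y)‖ * (ε⁻¹)^j :=
        mul_le_mul_of_nonneg_left h4 (norm_nonneg _)
      have hLεy : Lε y = (ε⁻¹ : ℝ) • y := by simp [hLε]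
      rw [Real.norm_eq_abs, abs_of_pos (inv_pos.2 (pow_pos hε n))]
      calc (ε^n)⁻¹ * ‖(iteratedFDeriv ℝ j φ (Lε y)).compContinuousLinearMap fun _ => Lε‖
          ≤ (ε^n)⁻¹ * (‖iteratedFDeriv ℝ j φ (Lε y)‖ * (ε⁻¹)^j) := by
            apply mul_le_mul_of_nonneg_left _ (le_of_lt (inv_pos.2 (pow_pos hε n)))
            exact le_trans h3 h5
        _ = (ε^n)⁻¹ * ((ε⁻¹)^j * ‖iteratedFDeriv ℝ j φ ((ε⁻¹ : ℝ) • y)‖) := by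
            rw [hLεy]; ring
    have hint : Integrable (fun y : Rn n => ‖iteratedFDeriv ℝ j φ ((ε⁻¹ : ℝ) • y)‖) volume := by
      have hbase : Integrable (fun y : Rn n => ‖iteratedFDeriv ℝ j φ y‖) volume :=
        ((hφc.continuous_iteratedFDeriv (by exact_mod_cast le_top)).integrable_of_hasCompactSupport
          (hφcs.iteratedFDeriv j)).norm
      exact hbase.comp_smul (inv_ne_zero (ne_of_gt hε))
    calc ‖iteratedFDeriv ℝ j χ x‖ ≤ ∫ y, ‖iteratedFDeriv ℝ j ρ y‖ := hstep1
      _ ≤ ∫ y, (ε^n)⁻¹ * ((ε⁻¹)^j * ‖iteratedFDeriv ℝ j φ ((ε⁻¹ : ℝ) • y)‖) := by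
          apply integral_mono_of_nonneg (Eventually.of_forall fun y => norm_nonneg _)
            ((hint.const_mul _).const_mul _) (Eventually.of_forall hρder)
      _ = (ε^n)⁻¹ * ((ε⁻¹)^j * ∫ y, ‖iteratedFDeriv ℝ j φ ((ε⁻¹ : ℝ) • y)‖) := by
          simp_rw [← smul_eq_mul, integral_smul]
      _ = (ε^n)⁻¹ * ((ε⁻¹)^j * (ε^n * ∫ y, ‖iteratedFDeriv ℝ j φ y‖)) := by
          have hcs2 := Measure.integral_comp_smul volume
            (fun z => ‖iteratedFDeriv ℝ j φ z‖) (ε⁻¹ : ℝ)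
          have hfr : Module.finrank ℝ (Rn n) = n := finrank_euclideanSpace_fin
          rw [hfr] at hcs2
          have habs : |((ε⁻¹ : ℝ) ^ n)⁻¹| = ε ^ n := by
            rw [← inv_pow, inv_inv, abs_of_pos (pow_pos hε n)]
          rw [habs, smul_eq_mul] at hcs2
          rw [hcs2]
      _ = (ε⁻¹)^j * ∫ y, ‖iteratedFDeriv ℝ j φ y‖ := by
          field_simp
      _ ≤ (ε⁻¹)^j * I := mul_le_mul_of_nonneg_left (hIj j hj) (pow_nonneg (le_of_lt (inv_pos.2 hε)) j)
      _ = I / ε^j := by rw [inv_pow]; field_simp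

end
noncomputable section
open Metric

theorem cptsIn_nonempty (n : ℕ) (Ω : Set (Rn n)) : (cptsIn n Ω).Nonempty :=
  ⟨∅, isCompact_empty, empty_subset _⟩

theorem cptsIn_directed (n : ℕ) (Ω : Set (Rn n)) : DirectedOn (· ⊆ ·) (cptsIn n Ω) :=
  fun a ha b hb => ⟨a ∪ b, ⟨ha.1.union hb.1, union_subset ha.2 hb.2⟩,
    subset_union_left, subset_union_right⟩

/-- Basic neighborhoods in the Fréchet topology of `C^∞(Ω)`. -/
theorem nhd_basis {n : ℕ} {Ω : Set (Rn n)} (ξ : CInfOn n Ω) {W : Set (CInfOn n Ω)}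
    (hW : W ∈ 𝓝 ξ) :
    ∃ K : Set (Rn n), IsCompact K ∧ K ⊆ Ω ∧ ∃ m : ℕ, ∃ ε : ℝ, 0 < ε ∧
      ∀ η : CInfOn n Ω, (∀ i ≤ m, ∀ x ∈ K, ‖iteratedFDerivWithin ℝ i η.val Ω x -
        iteratedFDerivWithin ℝ i ξ.val Ω x‖ ≤ ε) → η ∈ W := by
  have h1 : W ∈ comap (fun ζ : CInfOn n Ω => derivsMap n Ω ζ.val)
      (𝓝 (derivsMap n Ω ξ.val)) := by
    rw [← nhds_induced]
    exact hW
  obtain ⟨T, hT, hTsub⟩ := Filter.mem_comap.1 h1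
  rw [nhds_pi, Filter.mem_pi] at hT
  obtain ⟨I, hIfin, t, ht, hIsub⟩ := hT
  have key : ∀ i : ℕ, ∃ S : Set (Rn n), (IsCompact S ∧ S ⊆ Ω) ∧ ∃ ε : ℝ, 0 < ε ∧
      ∀ η : CInfOn n Ω, (∀ x ∈ S, ‖iteratedFDerivWithin ℝ i η.val Ω x -
        iteratedFDerivWithin ℝ i ξ.val Ω x‖ < ε) → derivsMap n Ω η.val i ∈ t i := by
    intro i
    have hb := UniformOnFun.hasBasis_nhds (Rn n)
      (ContinuousMultilinearMap ℝ (fun _ : Fin i => Rn n) ℂ) (cptsIn n Ω)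
      (derivsMap n Ω ξ.val i) (cptsIn_nonempty n Ω) (cptsIn_directed n Ω)
    obtain ⟨⟨S, U⟩, ⟨hS, hU⟩, hsub⟩ := hb.mem_iff.1 (ht i)
    obtain ⟨ε, hε, hεU⟩ := Metric.mem_uniformity_dist.1 hU
    refine ⟨S, hS, ε, hε, fun η hη => hsub ?_⟩
    intro x hx
    have := hη x hx
    have hdist : dist (iteratedFDerivWithin ℝ i η.val Ω x)
        (iteratedFDerivWithin ℝ i ξ.val Ω x) < ε := by
      rw [dist_eq_norm]; exact this
    exact hεU hdist
  choose S hS εf hεf hkey using key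
  refine ⟨⋃ i ∈ I, S i, hIfin.isCompact_biUnion (fun i _ => (hS i).1),
    iUnion₂_subset (fun i _ => (hS i).2), ?_⟩
  obtain ⟨m, hm⟩ := hIfin.bddAbove
  classical
  set Fi := hIfin.toFinset with hFi
  set εs : Finset ℝ := insert (1:ℝ) (Fi.image εf) with hεs
  have hεsne : εs.Nonempty := ⟨1, Finset.mem_insert_self _ _⟩
  set ε := εs.min' hεsne / 2 with hε
  have hεpos : 0 < ε := by
    have : 0 < εs.min' hεsne := by
      rw [Finset.lt_min'_iff]
      intro y hy
      rcases Finset.mem_insert.1 hy with rfl | hy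
      · norm_num
      · obtain ⟨i, _, rfl⟩ := Finset.mem_image.1 hy
        exact hεf i
    rw [hε]; linarith
  have hεlt : ∀ i ∈ I, ε < εf i := by
    intro i hi
    have h1 : εs.min' hεsne ≤ εf i :=
      Finset.min'_le _ _ (Finset.mem_insert_of_mem
        (Finset.mem_image_of_mem εf (hIfin.mem_toFinset.2 hi)))
    have h2 : 0 < εs.min' hεsne := by
      have := hεf i
      nlinarith [hεpos, hε]
    rw [hε] at *
    linarith
  refine ⟨m, ε, hεpos, fun η hη => ?_⟩
  apply hTsub
  show derivsMap n Ω η.val ∈ T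
  apply hIsub
  intro i hi
  apply hkey i
  intro x hx
  calc ‖iteratedFDerivWithin ℝ i η.val Ω x - iteratedFDerivWithin ℝ i ξ.val Ω x‖
      ≤ ε := hη i (hm hi) x (mem_biUnion hi hx)
    _ < εf i := hεlt i hi

end
noncomputable section
open Metric

/-- Uniform bound for finitely many derivatives on a compact set. -/
theorem boundOnCompact {n : ℕ} {Ω : Set (Rn n)} (hΩ : IsOpen Ω) (η : CInfOn n Ω)
    {K : Set (Rn n)} (hK : IsCompact K) (hKΩ : K ⊆ Ω) (m : ℕ) :
    ∃ C : ℝ, 0 ≤ C ∧ ∀ i ≤ m, ∀ x ∈ K, ‖iteratedFDerivWithin ℝ i η.val Ω x‖ ≤ C := by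
  have single : ∀ i : ℕ, ∃ C : ℝ, ∀ x ∈ K, ‖iteratedFDerivWithin ℝ i η.val Ω x‖ ≤ C := by
    intro i
    exact hK.exists_bound_of_continuousOn
      ((η.2.1.continuousOn_iteratedFDerivWithin (natle' i) hΩ.uniqueDiffOn).mono hKΩ)
  have : ∀ m : ℕ, ∃ C : ℝ, ∀ i ≤ m, ∀ x ∈ K, ‖iteratedFDerivWithin ℝ i η.val Ω x‖ ≤ C := by
    intro m
    induction m with
    | zero =>
      obtain ⟨C, hC⟩ := single 0
      exact ⟨C, fun i hi x hx => by rw [Nat.le_zero.1 hi]; exact hC x hx⟩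
    | succ m ih =>
      obtain ⟨C, hC⟩ := ih
      obtain ⟨C', hC'⟩ := single (m+1)
      refine ⟨max C C', fun i hi x hx => ?_⟩
      rcases Nat.lt_succ_iff_lt_or_eq.1 (Nat.lt_succ_of_le hi) with h | rfl
      · exact le_trans (hC i (Nat.lt_succ_iff.1 h) x hx) (le_max_left _ _)
      · exact le_trans (hC' x hx) (le_max_right _ _)
  obtain ⟨C, hC⟩ := this m
  exact ⟨max C 0, le_max_right _ _, fun i hi x hx => le_trans (hC i hi x hx) (le_max_left _ _)⟩

/-- Neighborhoods of `0` are absorbing. -/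
theorem absorb {n : ℕ} {Ω : Set (Rn n)} (hΩ : IsOpen Ω) {V : Set (CInfOn n Ω)}
    (hV : V ∈ 𝓝 (0 : CInfOn n Ω)) (η : CInfOn n Ω) :
    ∃ c : ℝ, 0 < c ∧ c ≤ 1 ∧ ((c : ℂ) • η) ∈ V := by
  obtain ⟨K, hK, hKΩ, m, ε, hε, hmem⟩ := nhd_basis 0 hV
  obtain ⟨C, hC0, hC⟩ := boundOnCompact hΩ η hK hKΩ m
  refine ⟨min 1 (ε / (C + 1)), lt_min one_pos (div_pos hε (by linarith)), min_le_left _ _, ?_⟩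
  apply hmem
  intro i hi x hx
  have hz : iteratedFDerivWithin ℝ i ((0 : CInfOn n Ω) : Rn n → ℂ) Ω x = 0 :=
    by exact congrFun iteratedFDerivWithin_zero_fun x
  have hsmul : iteratedFDerivWithin ℝ i (((min 1 (ε / (C + 1)) : ℝ) : ℂ) • η : CInfOn n Ω).val Ω x
      = ((min 1 (ε / (C + 1)) : ℝ) : ℂ) • iteratedFDerivWithin ℝ i η.val Ω x := by
    have hval : ((((min 1 (ε / (C + 1)) : ℝ) : ℂ) • η : CInfOn n Ω) : Rn n → ℂ)
        = ((min 1 (ε / (C + 1)) : ℝ) : ℂ) • (η : Rn n → ℂ) := rfl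
    rw [hval]
    exact iteratedFDerivWithin_const_smul_apply ((η.2.1.of_le (natle' i)).contDiffWithinAt (hKΩ hx))
      hΩ.uniqueDiffOn (hKΩ hx)
  rw [hz, hsmul, sub_zero, norm_smul]
  have h1 : ‖(((min 1 (ε / (C + 1)) : ℝ)) : ℂ)‖ = min 1 (ε / (C + 1)) := by
    rw [Complex.norm_real, Real.norm_eq_abs,
      abs_of_pos (lt_min one_pos (div_pos hε (by linarith)))]
  rw [h1]
  calc min 1 (ε / (C + 1)) * ‖iteratedFDerivWithin ℝ i η.val Ω x‖
      ≤ (ε / (C + 1)) * C := by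
        apply mul_le_mul (min_le_right _ _) (hC i hi x hx) (norm_nonneg _)
        positivity
    _ ≤ ε := by
        rw [div_mul_eq_mul_div, div_le_iff₀ (by linarith : (0:ℝ) < C + 1)]
        nlinarith
end
noncomputable section
open Metric
open scoped Manifold

/-- Iterated demi-linear estimate. -/
theorem demi_iter {n : ℕ} {Ω : Set (Rn n)} {M : ℝ} (hM : 1 ≤ M)
    {V : Set (CInfOn n Ω)} {f : CInfOn n Ω → ℂ}
    (hf : DemiK (fun t : ℂ => (M : ℂ) * t) V f)
    (x u : CInfOn n Ω) (hu : u ∈ V) (t : ℂ) (ht : ‖t‖ ≤ 1) :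
    ∀ N : ℕ, ‖f (x + N • (t • u)) - f x‖ ≤ N * (M * (‖t‖ * ‖f u‖)) := by
  intro N
  induction N with
  | zero => simp
  | succ N ih =>
    have hstep : x + (N+1) • (t • u) = (x + N • (t • u)) + t • u := by
      rw [succ_nsmul, ← add_assoc]
    obtain ⟨s, hs, heq⟩ := hf.2 (x + N • (t • u)) u hu t ht
    have hsn : ‖s‖ ≤ M * ‖t‖ := by
      calc ‖s‖ ≤ ‖(M:ℂ) * t‖ := hs
        _ = M * ‖t‖ := by
          rw [norm_mul, Complex.norm_real, Real.norm_eq_abs, abs_of_pos (by linarith)]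
    calc ‖f (x + (N+1) • (t • u)) - f x‖
        = ‖(f (x + N • (t • u)) - f x) + s * f u‖ := by
          rw [hstep, heq]; ring_nf
      _ ≤ ‖f (x + N • (t • u)) - f x‖ + ‖s * f u‖ := norm_add_le _ _
      _ ≤ N * (M * (‖t‖ * ‖f u‖)) + M * ‖t‖ * ‖f u‖ := by
          apply add_le_add ih
          rw [norm_mul]
          apply mul_le_mul_of_nonneg_right hsn (norm_nonneg _)
      _ = (N + 1 : ℕ) * (M * (‖t‖ * ‖f u‖)) := by push_cast; ring
  
/-- `f` vanishes on smooth functions whose (compact) support avoids `supp f`. -/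
theorem vanish_off_support {n : ℕ} {Ω : Set (Rn n)} (hΩ : IsOpen Ω) {M : ℝ} (hM : 1 ≤ M)
    {V : Set (CInfOn n Ω)} (hV : V ∈ 𝓝 (0 : CInfOn n Ω)) {f : CInfOn n Ω → ℂ}
    (hf : DemiK (fun t : ℂ => (M : ℂ) * t) V f)
    (η : CInfOn n Ω) (hcpt : IsCompact (tsupport (η : Rn n → ℂ)))
    (hsΩ : tsupport (η : Rn n → ℂ) ⊆ Ω)
    (hdisj : ∀ x ∈ tsupport (η : Rn n → ℂ), x ∉ fsupp Ω Subtype.val f) :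
    f η = 0 := by
  classical
  set s := tsupport (η : Rn n → ℂ) with hs
  -- good neighborhoods
  have key : ∀ x : ↥s, ∃ G : Set (Rn n), IsOpen G ∧ G ⊆ Ω ∧ (x : Rn n) ∈ G ∧
      ∀ ζ : CInfOn n Ω, suppFun Ω ζ.val ⊆ G → f ζ = 0 := by
    rintro ⟨x, hx⟩
    have hxΩ : x ∈ Ω := hsΩ hx
    have hnot := hdisj x hx
    rw [fsupp] at hnot
    simp only [Set.mem_setOf_eq, not_and, not_forall, not_exists] at hnot
    obtain ⟨G, hGo, hGΩ, hxG, hG⟩ := hnot hxΩ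
    refine ⟨G, hGo, hGΩ, hxG, fun ζ hζ => ?_⟩
    by_contra h
    exact h (by push_neg at hG; exact (hG ζ hζ))
  choose G hGo hGΩ hxG hG using key
  -- finite subcover
  have hcover : s ⊆ ⋃ i : ↥s, G i := fun x hx => Set.mem_iUnion.2 ⟨⟨x, hx⟩, hxG _⟩
  obtain ⟨T, hT⟩ := hcpt.elim_finite_subcover (fun i : ↥s => G i) (fun i => hGo i) hcover
  -- smooth partition of unity
  obtain ⟨p, hp⟩ := SmoothPartitionOfUnity.exists_isSubordinate (𝓘(ℝ, Rn n))
    (isClosed_tsupport (η : Rn n → ℂ)) (fun j : {i : ↥s // i ∈ T} => G j.1) (fun j => hGo j.1)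
    (by intro x hx
        have := hT hx
        rw [Set.mem_iUnion₂] at this
        obtain ⟨i, hiT, hxi⟩ := this
        exact Set.mem_iUnion.2 ⟨⟨i, hiT⟩, hxi⟩)
  let ι := {i : ↥s // i ∈ T}
  -- the pieces
  have hpc : ∀ j : ι, ContDiff ℝ (⊤ : ℕ∞) (p j : Rn n → ℝ) := by
    intro j
    exact contMDiff_iff_contDiff.1 (p j).contMDiff
  set ηp : ι → CInfOn n Ω := fun j =>
    ⟨fun x => ((p j x : ℝ) : ℂ) * (η : Rn n → ℂ) x,
      by
        constructor
        · exact ((Complex.ofRealCLM.contDiff.comp (hpc j)).contDiffOn).mul η.2.1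
        · intro x hx
          have h0 : (η : Rn n → ℂ) x = 0 := η.2.2 x hx
          show ((p j x : ℝ) : ℂ) * (η : Rn n → ℂ) x = 0
          rw [h0, mul_zero]⟩ with hηp
  -- the sum decomposition
  have hsum : η = ∑ j : ι, ηp j := by
    apply Subtype.ext
    have hval : ((∑ j : ι, ηp j : CInfOn n Ω) : Rn n → ℂ) = ∑ j : ι, (ηp j : Rn n → ℂ) := by
      simp [AddSubmonoidClass.coe_finset_sum]
    rw [hval]
    funext x
    rw [Finset.sum_apply]
    by_cases hx : x ∈ s
    · have h1 : ∑ᶠ j, p j x = 1 := p.sum_eq_one hx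
      rw [finsum_eq_sum_of_fintype] at h1
      have : ∑ j : ι, ((p j x : ℝ) : ℂ) * (η : Rn n → ℂ) x
          = ((∑ j : ι, p j x : ℝ) : ℂ) * (η : Rn n → ℂ) x := by
        rw [← Finset.sum_mul]
        push_cast
        rfl
      show (η : Rn n → ℂ) x = ∑ j : ι, ((p j x : ℝ) : ℂ) * (η : Rn n → ℂ) x
      rw [this, h1]
      norm_num
    · have hz : (η : Rn n → ℂ) x = 0 := image_eq_zero_of_notMem_tsupport hx
      show (η : Rn n → ℂ) x = ∑ j : ι, ((p j x : ℝ) : ℂ) * (η : Rn n → ℂ) x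
      rw [hz]
      symm
      apply Finset.sum_eq_zero
      intro j _
      exact mul_zero _
  -- each piece scaled is killed by f
  have hkill : ∀ (j : ι) (c : ℂ), f (c • ηp j) = 0 := by
    intro j c
    apply hG j.1
    intro x hx
    rcases hx with ⟨hx1, hx2⟩
    have h1 : closure {y | y ∈ Ω ∧ (c • ηp j : CInfOn n Ω).val y ≠ 0} ⊆ tsupport (p j : Rn n → ℝ) := by
      apply closure_mono ?_ |>.trans (closure_minimal subset_closure (isClosed_tsupport _))
      intro y hy
      have : (c • ηp j : CInfOn n Ω).val y ≠ 0 := hy.2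
      have hval : (c • ηp j : CInfOn n Ω).val y = c * (((p j y : ℝ) : ℂ) * (η : Rn n → ℂ) y) := rfl
      rw [hval] at this
      intro hpz
      apply this
      rw [hpz]
      push_cast
      ring
    exact (hp j) (h1 hx1)
  -- induction over finite sums
  have hind : ∀ Fs : Finset ι, f (∑ j ∈ Fs, ηp j) = 0 := by
    intro Fs
    induction Fs using Finset.induction_on with
    | empty => simpa using hf.1
    | @insert a Fs ha ih =>
      rw [Finset.sum_insert ha]
      obtain ⟨c, hc0, hc1, hcV⟩ := absorb hΩ hV (ηp a)
      set N : ℕ := ⌈c⁻¹⌉₊ with hN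
      have hNc : 1 ≤ (N : ℝ) * c := by
        have h1 : c⁻¹ ≤ (N : ℝ) := Nat.le_ceil c⁻¹
        calc (1:ℝ) = c⁻¹ * c := (inv_mul_cancel₀ (ne_of_gt hc0)).symm
          _ ≤ N * c := mul_le_mul_of_nonneg_right h1 hc0.le
      set t : ℂ := (((N : ℝ) * c : ℝ) : ℂ)⁻¹ with ht
      have htn : ‖t‖ ≤ 1 := by
        rw [ht, norm_inv, Complex.norm_real, Real.norm_eq_abs, abs_of_pos (by linarith)]
        exact inv_le_one_of_one_le₀ hNc
      have hNC0 : ((N : ℝ) * c : ℝ) ≠ 0 := by linarith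
      have hrecon : (N • (t • ((c:ℂ) • ηp a))) = ηp a := by
        rw [smul_smul, ← Nat.cast_smul_eq_nsmul ℂ, smul_smul]
        have hsc : (N:ℂ) * (t * (c:ℂ)) = 1 := by
          rw [ht]
          push_cast
          field_simp
          rw [div_self (by exact_mod_cast hNC0)]
        rw [hsc, one_smul]
      have hbound := demi_iter hM hf (∑ j ∈ Fs, ηp j) ((c:ℂ) • ηp a) hcV t htn N
      rw [hrecon, hkill a (c:ℂ), ih] at hbound
      have h0 : ‖f (∑ j ∈ Fs, ηp j + ηp a)‖ ≤ 0 := by simpa using hbound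
      have h1 : f (∑ j ∈ Fs, ηp j + ηp a) = 0 :=
        norm_le_zero_iff.1 h0
      rw [add_comm] at h1
      exact h1
  rw [hsum]
  exact hind Finset.univ
end
noncomputable section
open Metric

theorem natlt' (j : ℕ) : (j : WithTop ℕ∞) < ((⊤:ℕ∞) : WithTop ℕ∞) := by
  refine lt_of_lt_of_le ?_ (natle' (j+1))
  exact_mod_cast Nat.lt_succ_self j

/-- Leibniz: product with smooth real function has vanishing derivatives where all
derivatives of the second factor vanish. -/
theorem prod_deriv_zero {n : ℕ} {Ω : Set (Rn n)} (hΩ : IsOpen Ω)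
    (ψ : Rn n → ℝ) (hψ : ContDiff ℝ (⊤ : ℕ∞) ψ)
    (g : Rn n → ℂ) (hg : ContDiffOn ℝ (⊤ : ℕ∞) g Ω) {y : Rn n} (hy : y ∈ Ω) (i : ℕ)
    (hzero : ∀ j ≤ i, iteratedFDerivWithin ℝ j g Ω y = 0) :
    iteratedFDerivWithin ℝ i (fun x => (ψ x : ℂ) * g x) Ω y = 0 := by
  have hψℂ : ContDiffOn ℝ ((⊤:ℕ∞) : WithTop ℕ∞) (fun x : Rn n => ((ψ x : ℝ) : ℂ)) Ω :=
    (Complex.ofRealCLM.contDiff.comp hψ).contDiffOn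
  rw [← norm_le_zero_iff]
  calc ‖iteratedFDerivWithin ℝ i (fun x => (ψ x : ℂ) * g x) Ω y‖
      ≤ ∑ j ∈ Finset.range (i + 1), (i.choose j : ℝ) *
          ‖iteratedFDerivWithin ℝ j (fun x : Rn n => ((ψ x : ℝ) : ℂ)) Ω y‖ *
          ‖iteratedFDerivWithin ℝ (i - j) g Ω y‖ :=
        norm_iteratedFDerivWithin_mul_le hψℂ hg hΩ.uniqueDiffOn hy (natle' i)
    _ = 0 := by
        apply Finset.sum_eq_zero
        intro j hj
        rw [hzero (i - j) (Nat.sub_le _ _), norm_zero, mul_zero]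

/-- Taylor-type estimate near the zero set of all derivatives up to order `k`. -/
theorem taylor_bound {n : ℕ} {Ω : Set (Rn n)} (hΩ : IsOpen Ω)
    (g : Rn n → ℂ) (hg : ContDiffOn ℝ (⊤ : ℕ∞) g Ω) (k : ℕ)
    (F₀ K₃ : Set (Rn n)) (hF₀c : IsCompact F₀) (hF₀ne : F₀.Nonempty)
    (r : ℝ) (hr : 0 ≤ r)
    (hseg : ∀ z : Rn n, (∃ y ∈ F₀, dist z y ≤ r) → z ∈ K₃)
    (hK₃Ω : K₃ ⊆ Ω) (B : ℝ)
    (hB : ∀ z ∈ K₃, ‖iteratedFDerivWithin ℝ (k+1) g Ω z‖ ≤ B)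
    (hzero : ∀ i ≤ k, ∀ y ∈ F₀, iteratedFDerivWithin ℝ i g Ω y = 0) :
    ∀ j ≤ k + 1, ∀ z : Rn n, infDist z F₀ ≤ r →
      ‖iteratedFDerivWithin ℝ (k + 1 - j) g Ω z‖ ≤ B * r ^ j := by
  have hnear : ∀ z : Rn n, infDist z F₀ ≤ r → ∃ y ∈ F₀, dist z y ≤ r ∧ dist z y = infDist z F₀ := by
    intro z hz
    obtain ⟨y, hy, hdy⟩ := hF₀c.exists_infDist_eq_dist hF₀ne z
    exact ⟨y, hy, hdy ▸ hz, hdy.symm⟩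
  intro j
  induction j with
  | zero =>
    intro _ z hz
    obtain ⟨y, hy, hdy, _⟩ := hnear z hz
    simpa using hB z (hseg z ⟨y, hy, hdy⟩)
  | succ j ih =>
    intro hj z hz
    have hjk : j ≤ k + 1 := le_of_lt (Nat.lt_of_succ_le hj)
    set i := k + 1 - (j + 1) with hi
    have hik : i ≤ k := by omega
    have hi1 : i + 1 = k + 1 - j := by omega
    obtain ⟨y, hy, hdy, _⟩ := hnear z hz
    -- points of the segment
    have hsegm : ∀ w ∈ segment ℝ y z, dist w y ≤ dist z y := by
      intro w hw
      obtain ⟨a, b, ha, hb, hab, rfl⟩ := hw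
      have : a • y + b • z - y = b • (z - y) := by
        have hay : a • y = y - b • y := by
          have hba : a = 1 - b := by linarith
          rw [hba, sub_smul, one_smul]
        rw [hay]; module
      rw [dist_eq_norm, this, norm_smul, dist_eq_norm]
      calc ‖b‖ * ‖z - y‖ ≤ 1 * ‖z - y‖ := by
            apply mul_le_mul_of_nonneg_right _ (norm_nonneg _)
            rw [Real.norm_eq_abs, abs_of_nonneg hb]; linarith
        _ = ‖z - y‖ := one_mul _
    have hsegK : ∀ w ∈ segment ℝ y z, w ∈ K₃ := by
      intro w hw
      exact hseg w ⟨y, hy, le_trans (hsegm w hw) hdy⟩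
    have hsegInf : ∀ w ∈ segment ℝ y z, infDist w F₀ ≤ r := by
      intro w hw
      exact le_trans (infDist_le_dist_of_mem hy) (le_trans (hsegm w hw) hdy)
    -- derivative data
    set f' : Rn n → (Rn n →L[ℝ] ContinuousMultilinearMap ℝ (fun _ : Fin i => Rn n) ℂ) :=
      fderivWithin ℝ (iteratedFDerivWithin ℝ i g Ω) Ω with hf'
    have hdiff : DifferentiableOn ℝ (iteratedFDerivWithin ℝ i g Ω) Ω :=
      hg.differentiableOn_iteratedFDerivWithin (natlt' i) hΩ.uniqueDiffOn
    have hder : ∀ w ∈ segment ℝ y z,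
        HasFDerivWithinAt (iteratedFDerivWithin ℝ i g Ω) (f' w) (segment ℝ y z) w := by
      intro w hw
      have hwΩ : w ∈ Ω := hK₃Ω (hsegK w hw)
      have h1 : HasFDerivWithinAt (iteratedFDerivWithin ℝ i g Ω) (f' w) Ω w :=
        (hdiff w hwΩ).hasFDerivWithinAt
      exact h1.mono (fun u hu => hK₃Ω (hsegK u hu))
    have hnorm : ∀ w ∈ segment ℝ y z, ‖f' w‖ ≤ B * r ^ j := by
      intro w hw
      have heq : ‖f' w‖ = ‖iteratedFDerivWithin ℝ (i+1) g Ω w‖ := by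
        have h2 := congrFun (iteratedFDerivWithin_succ_eq_comp_left
          (𝕜 := ℝ) (n := i) (f := g) (s := Ω)) w
        rw [h2]
        simp only [Function.comp_apply]
        rw [LinearIsometryEquiv.norm_map]
      rw [heq, hi1]
      exact ih hjk w (hsegInf w hw)
    have hzeroy : iteratedFDerivWithin ℝ i g Ω y = 0 := hzero i hik y hy
    have hmvt := Convex.norm_image_sub_le_of_norm_hasFDerivWithin_le hder hnorm
      (convex_segment y z) (left_mem_segment ℝ y z) (right_mem_segment ℝ y z)
    have hB0 : 0 ≤ B := le_trans (norm_nonneg _)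
      (hB y (hseg y ⟨y, hy, by simp [hr]⟩))
    calc ‖iteratedFDerivWithin ℝ (k+1-(j+1)) g Ω z‖
        = ‖iteratedFDerivWithin ℝ i g Ω z - iteratedFDerivWithin ℝ i g Ω y‖ := by
          rw [← hi, hzeroy, sub_zero]
      _ ≤ (B * r^j) * ‖z - y‖ := hmvt
      _ ≤ (B * r^j) * r := by
          apply mul_le_mul_of_nonneg_left _ (by positivity)
          rw [← dist_eq_norm]; exact hdy
      _ = B * r^(j+1) := by ring

end
noncomputable section
open Metric

theorem suppFun_subset_tsupport {n : ℕ} (Ω : Set (Rn n)) (g : Rn n → ℂ) :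
    suppFun Ω g ⊆ tsupport g := fun x hx =>
  closure_mono (fun y (hy : y ∈ Ω ∧ g y ≠ 0) => hy.2) hx.1

theorem main_compact {n : ℕ} {Ω : Set (Rn n)} (hΩ : IsOpen Ω) {M : ℝ} (hM : 1 ≤ M)
    {V : Set (CInfOn n Ω)} (hV : V ∈ 𝓝 (0 : CInfOn n Ω)) {f : CInfOn n Ω → ℂ}
    (hf : DemiK (fun t : ℂ => (M : ℂ) * t) V f) (k : ℕ)
    (horder : ∀ K : Set (Rn n), IsCompact K → K ⊆ Ω → ∃ C > 0,
      ∀ ζ : CInfOn n Ω, suppFun Ω ζ.val ⊆ K → ‖f ζ‖ ≤ C * pnorm Ω K k ζ.val)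
    (ξ' : CInfOn n Ω) (hcpt : IsCompact (tsupport (ξ' : Rn n → ℂ)))
    (hsupΩ : tsupport (ξ' : Rn n → ℂ) ⊆ Ω)
    (hzero : ∀ i ≤ k, ∀ y ∈ fsupp Ω Subtype.val f,
      iteratedFDerivWithin ℝ i (ξ' : Rn n → ℂ) Ω y = 0) :
    f ξ' = 0 := by
  classical
  set K' := tsupport (ξ' : Rn n → ℂ) with hK'
  set F₀ := fsupp Ω Subtype.val f ∩ K' with hF₀
  have hfsuppΩ : fsupp Ω Subtype.val f ⊆ Ω := fun x hx => hx.1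
  have hF₀closed : IsClosed F₀ := by
    rw [← closure_subset_iff_isClosed]
    intro z hz
    have hzK : z ∈ K' := by
      have h1 : closure F₀ ⊆ closure K' := closure_mono inter_subset_right
      have h2 : closure K' = K' := (isClosed_tsupport _).closure_eq
      exact h2 ▸ h1 hz
    refine ⟨⟨hsupΩ hzK, ?_⟩, hzK⟩
    intro G hGo hGΩ hzG
    obtain ⟨w, hwG, hwF⟩ := mem_closure_iff.1 hz G hGo hzG
    exact hwF.1.2 G hGo hGΩ hwG
  have hF₀cpt : IsCompact F₀ := hcpt.of_isClosed_subset hF₀closed inter_subset_right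
  by_cases hF₀ne : F₀.Nonempty
  case neg =>
    apply vanish_off_support hΩ hM hV hf ξ' hcpt hsupΩ
    intro x hx hxf
    exact hF₀ne ⟨x, hxf, hx⟩
  case pos =>
  have hK'ne : K'.Nonempty := ⟨hF₀ne.choose, hF₀ne.choose_spec.2⟩
  obtain ⟨δ, hδ, hthick⟩ := hcpt.exists_thickening_subset_open hΩ hsupΩ
  set δ₀ := δ / 2 with hδ₀
  have hδ₀pos : 0 < δ₀ := by rw [hδ₀]; linarith
  set K₃ := {x : Rn n | infDist x K' ≤ δ₀} with hK₃
  have hK₃Ω : K₃ ⊆ Ω := by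
    intro x hx
    apply hthick
    rw [Metric.mem_thickening_iff]
    obtain ⟨y, hy, hdy⟩ := hcpt.exists_infDist_eq_dist hK'ne x
    refine ⟨y, hy, ?_⟩
    rw [← hdy]
    calc infDist x K' ≤ δ₀ := hx
      _ < δ := by rw [hδ₀]; linarith
  have hK₃closed : IsClosed K₃ := isClosed_le (continuous_infDist_pt _) continuous_const
  have hK₃cpt : IsCompact K₃ := by
    obtain ⟨R, hR⟩ := hcpt.isBounded.subset_closedBall (0 : Rn n)
    apply (isCompact_closedBall (0 : Rn n) (R + δ₀)).of_isClosed_subset hK₃closed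
    intro x hx
    obtain ⟨y, hy, hdy⟩ := hcpt.exists_infDist_eq_dist hK'ne x
    have h1 : dist x y ≤ δ₀ := by rw [← hdy]; exact hx
    have h2 : dist y (0 : Rn n) ≤ R := hR hy
    rw [mem_closedBall]
    calc dist x 0 ≤ dist x y + dist y 0 := dist_triangle _ _ _
      _ ≤ δ₀ + R := add_le_add h1 h2
      _ = R + δ₀ := by ring
  obtain ⟨B, hB0, hB⟩ := boundOnCompact hΩ ξ' hK₃cpt hK₃Ω (k+1)
  obtain ⟨I, hIpos, hwhit⟩ := whitney n k
  obtain ⟨C, hCpos, hord⟩ := horder K' hcpt hsupΩ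
  set P : ℝ := (2:ℝ)^k * (I * B * 3^(2*k+2)) with hP
  have hPpos : 0 ≤ P := by positivity
  set Q : ℝ := M * (C * ((k+1) * P)) with hQ
  have hQ0 : 0 ≤ Q := by positivity
  have key : ∀ ε : ℝ, 0 < ε → ε ≤ 1 → 3 * ε ≤ δ₀ → ‖f ξ'‖ ≤ Q * ε := by
    intro ε hε hε1 hε3
    obtain ⟨χ, hχc, hχ1, hχ0, hχd⟩ := hwhit F₀ ε hε
    have hχℂ : ContDiffOn ℝ ((⊤:ℕ∞) : WithTop ℕ∞) (fun x : Rn n => ((χ x : ℝ) : ℂ)) Ω :=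
      (Complex.ofRealCLM.contDiff.comp hχc).contDiffOn
    set η : CInfOn n Ω := ⟨fun x => ((χ x : ℝ) : ℂ) * (ξ' : Rn n → ℂ) x,
      ⟨hχℂ.mul ξ'.2.1, fun x hx => by
        show ((χ x : ℝ) : ℂ) * (ξ' : Rn n → ℂ) x = 0
        rw [ξ'.2.2 x hx, mul_zero]⟩⟩ with hη
    have hηval : ∀ z, (η : Rn n → ℂ) z = ((χ z : ℝ) : ℂ) * (ξ' : Rn n → ℂ) z := fun z => rfl
    have hseg : ∀ z : Rn n, (∃ y ∈ F₀, dist z y ≤ 3*ε) → z ∈ K₃ := by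
      rintro z ⟨y, hy, hdzy⟩
      show infDist z K' ≤ δ₀
      calc infDist z K' ≤ dist z y := infDist_le_dist_of_mem hy.2
        _ ≤ 3*ε := hdzy
        _ ≤ δ₀ := hε3
    have hzero' : ∀ i ≤ k, ∀ y ∈ F₀, iteratedFDerivWithin ℝ i (ξ' : Rn n → ℂ) Ω y = 0 :=
      fun i hi y hy => hzero i hi y hy.1
    have htay := taylor_bound hΩ (ξ' : Rn n → ℂ) ξ'.2.1 k F₀ K₃ hF₀cpt hF₀ne (3*ε)
      (by positivity) hseg hK₃Ω B (fun z hz => hB (k+1) le_rfl z hz) hzero'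
    have hptwise : ∀ i ≤ k, ∀ x ∈ K',
        ‖iteratedFDerivWithin ℝ i (η : Rn n → ℂ) Ω x‖ ≤ P * ε := by
      intro i hi x hx
      have hxΩ : x ∈ Ω := hsupΩ hx
      by_cases hd : infDist x F₀ ≤ 3*ε
      case neg =>
        have hO : {z : Rn n | 3*ε < infDist z F₀} ∈ 𝓝 x :=
          (isOpen_lt continuous_const (continuous_infDist_pt _)).mem_nhds (not_le.1 hd)
        have hev : (η : Rn n → ℂ) =ᶠ[𝓝[Ω] x] (fun _ => (0:ℂ)) := by
          apply Filter.mem_of_superset (nhdsWithin_le_nhds hO)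
          intro z hz
          show (η : Rn n → ℂ) z = 0
          rw [hηval z, hχ0 z (le_of_lt hz)]
          norm_num
        have h0 : (η : Rn n → ℂ) x = 0 := by
          rw [hηval x, hχ0 x (le_of_lt (not_le.1 hd))]
          norm_num
        rw [hev.iteratedFDerivWithin_eq h0 i,
          iteratedFDerivWithin_zero_fun]
        simpa using by positivity
      case pos =>
        have hleib : ‖iteratedFDerivWithin ℝ i (η : Rn n → ℂ) Ω x‖ ≤
            ∑ j ∈ Finset.range (i + 1), (i.choose j : ℝ) *
              ‖iteratedFDerivWithin ℝ j (fun z : Rn n => ((χ z : ℝ) : ℂ)) Ω x‖ *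
              ‖iteratedFDerivWithin ℝ (i - j) (ξ' : Rn n → ℂ) Ω x‖ := by
          have := norm_iteratedFDerivWithin_mul_le (𝕜 := ℝ)
            (f := fun z : Rn n => ((χ z : ℝ) : ℂ)) (g := (ξ' : Rn n → ℂ))
            hχℂ ξ'.2.1 hΩ.uniqueDiffOn hxΩ (natle' i)
          exact this
        have hterm : ∀ j ∈ Finset.range (i + 1), (i.choose j : ℝ) *
            ‖iteratedFDerivWithin ℝ j (fun z : Rn n => ((χ z : ℝ) : ℂ)) Ω x‖ *
            ‖iteratedFDerivWithin ℝ (i - j) (ξ' : Rn n → ℂ) Ω x‖ ≤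
            (i.choose j : ℝ) * (I * B * 3^(2*k+2) * ε) := by
          intro j hj
          have hjle : j ≤ i := Nat.lt_succ_iff.1 (Finset.mem_range.1 hj)
          have hχfact : ‖iteratedFDerivWithin ℝ j (fun z : Rn n => ((χ z : ℝ) : ℂ)) Ω x‖ ≤
              I / ε^j := by
            have h1 : ‖iteratedFDerivWithin ℝ j (fun z : Rn n => ((χ z : ℝ) : ℂ)) Ω x‖ =
                ‖iteratedFDerivWithin ℝ j χ Ω x‖ :=
              Complex.ofRealLI.norm_iteratedFDerivWithin_comp_left
                (hχc.contDiffOn.contDiffWithinAt hxΩ) hΩ.uniqueDiffOn hxΩ (natle' j)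
            rw [h1, iteratedFDerivWithin_of_isOpen j hΩ hxΩ]
            exact hχd j (hjle.trans hi) x
          have hξfact : ‖iteratedFDerivWithin ℝ (i - j) (ξ' : Rn n → ℂ) Ω x‖ ≤
              B * (3*ε)^(k+1-(i-j)) := by
            have h2 := htay (k+1-(i-j)) (by omega) x hd
            rwa [show k+1 - (k+1-(i-j)) = i - j by omega] at h2
          calc (i.choose j : ℝ) *
              ‖iteratedFDerivWithin ℝ j (fun z : Rn n => ((χ z : ℝ) : ℂ)) Ω x‖ *
              ‖iteratedFDerivWithin ℝ (i - j) (ξ' : Rn n → ℂ) Ω x‖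
              ≤ (i.choose j : ℝ) * (I / ε^j) * (B * (3*ε)^(k+1-(i-j))) := by
                apply mul_le_mul _ hξfact (norm_nonneg _) (by positivity)
                exact mul_le_mul_of_nonneg_left hχfact (Nat.cast_nonneg _)
            _ = (i.choose j : ℝ) * (I * B * (3^(k+1-(i-j)) * ε^(k+1-i))) := by
                rw [mul_pow]
                rw [show k+1-(i-j) = (k+1-i) + j by omega]
                rw [pow_add ε]
                field_simp
            _ ≤ (i.choose j : ℝ) * (I * B * 3^(2*k+2) * ε) := by
                apply mul_le_mul_of_nonneg_left _ (Nat.cast_nonneg _)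
                have h3 : (3:ℝ)^(k+1-(i-j)) ≤ 3^(2*k+2) :=
                  pow_le_pow_right₀ (by norm_num) (by omega)
                have h4 : ε^(k+1-i) ≤ ε :=
                  calc ε^(k+1-i) ≤ ε^1 := pow_le_pow_of_le_one hε.le hε1 (by omega)
                    _ = ε := pow_one ε
                calc I * B * (3^(k+1-(i-j)) * ε^(k+1-i))
                    ≤ I * B * (3^(2*k+2) * ε) := by
                      apply mul_le_mul_of_nonneg_left _ (by positivity)
                      exact mul_le_mul h3 h4 (by positivity) (by positivity)
                  _ = I * B * 3^(2*k+2) * ε := by ring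
        calc ‖iteratedFDerivWithin ℝ i (η : Rn n → ℂ) Ω x‖
            ≤ ∑ j ∈ Finset.range (i + 1), (i.choose j : ℝ) *
              ‖iteratedFDerivWithin ℝ j (fun z : Rn n => ((χ z : ℝ) : ℂ)) Ω x‖ *
              ‖iteratedFDerivWithin ℝ (i - j) (ξ' : Rn n → ℂ) Ω x‖ := hleib
          _ ≤ ∑ j ∈ Finset.range (i + 1), (i.choose j : ℝ) * (I * B * 3^(2*k+2) * ε) :=
              Finset.sum_le_sum hterm
          _ = (2:ℝ)^i * (I * B * 3^(2*k+2) * ε) := by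
              rw [← Finset.sum_mul]
              congr 1
              rw [← Nat.cast_sum, Nat.sum_range_choose]
              push_cast
              ring
          _ ≤ (2:ℝ)^k * (I * B * 3^(2*k+2) * ε) := by
              apply mul_le_mul_of_nonneg_right _ (by positivity)
              exact pow_le_pow_right₀ one_le_two hi
          _ = P * ε := by rw [hP]; ring
    -- absorb η into V and apply demi-linearity
    obtain ⟨c, hc0, hc1, hcV⟩ := absorb hΩ hV η
    -- pnorm estimate for c • η
    have hpn : pnorm Ω K' k ((c:ℂ) • η : CInfOn n Ω).val ≤ (k+1) * (c * (P * ε)) := by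
      have hsup : ∀ i ≤ k, (⨆ x ∈ K',
          ‖iteratedFDerivWithin ℝ i ((c:ℂ) • η : CInfOn n Ω).val Ω x‖) ≤ c * (P * ε) := by
        intro i hi
        have hb : (0:ℝ) ≤ c * (P * ε) := by positivity
        apply Real.iSup_le _ hb
        intro x
        apply Real.iSup_le _ hb
        intro hx
        have hxΩ : x ∈ Ω := hsupΩ hx
        have hval : ((c:ℂ) • η : CInfOn n Ω).val = (c:ℂ) • (η : Rn n → ℂ) := rfl
        rw [hval, iteratedFDerivWithin_const_smul_apply ((η.2.1.of_le (natle' i)).contDiffWithinAt hxΩ)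
          hΩ.uniqueDiffOn hxΩ, norm_smul]
        have hnc : ‖((c:ℝ):ℂ)‖ = c := by
          rw [Complex.norm_real, Real.norm_eq_abs, abs_of_pos hc0]
        rw [hnc]
        exact mul_le_mul_of_nonneg_left (hptwise i hi x hx) hc0.le
      calc pnorm Ω K' k ((c:ℂ) • η : CInfOn n Ω).val
          ≤ ∑ i ∈ Finset.range (k+1), (c * (P * ε)) := by
            apply Finset.sum_le_sum
            intro i hi
            exact hsup i (Nat.lt_succ_iff.1 (Finset.mem_range.1 hi))
        _ = (k+1) * (c * (P * ε)) := by
            rw [Finset.sum_const, Finset.card_range, nsmul_eq_mul]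
            push_cast
            ring
    -- support of c • η
    have hηsupp : tsupport ((η : Rn n → ℂ)) ⊆ K' := by
      apply closure_minimal _ (isClosed_tsupport _)
      intro z hz
      have : (ξ' : Rn n → ℂ) z ≠ 0 := by
        intro h0
        apply hz
        rw [hηval z, h0, mul_zero]
      exact subset_closure this
    have hcsupp : suppFun Ω ((c:ℂ) • η : CInfOn n Ω).val ⊆ K' := by
      apply (suppFun_subset_tsupport Ω _).trans
      apply (closure_minimal _ (isClosed_tsupport _)).trans hηsupp
      intro z hz
      have : (η : Rn n → ℂ) z ≠ 0 := by
        intro h0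
        apply hz
        show (c:ℂ) • (η : Rn n → ℂ) z = 0
        rw [h0, smul_zero]
      exact subset_closure this
    have hfc : ‖f ((c:ℂ) • η)‖ ≤ C * ((k+1) * (c * (P * ε))) := by
      calc ‖f ((c:ℂ) • η)‖ ≤ C * pnorm Ω K' k ((c:ℂ) • η : CInfOn n Ω).val :=
            hord _ hcsupp
        _ ≤ C * ((k+1) * (c * (P * ε))) := mul_le_mul_of_nonneg_left hpn hCpos.le
    -- demi-linear splitting
    set N : ℕ := ⌈c⁻¹⌉₊ with hN
    have hNc : 1 ≤ (N : ℝ) * c := by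
      have h1 : c⁻¹ ≤ (N : ℝ) := Nat.le_ceil c⁻¹
      calc (1:ℝ) = c⁻¹ * c := (inv_mul_cancel₀ (ne_of_gt hc0)).symm
        _ ≤ N * c := mul_le_mul_of_nonneg_right h1 hc0.le
    have hNC0 : ((N : ℝ) * c : ℝ) ≠ 0 := by linarith
    set t : ℂ := (((N : ℝ) * c : ℝ) : ℂ)⁻¹ with ht
    have htn : ‖t‖ ≤ 1 := by
      rw [ht, norm_inv, Complex.norm_real, Real.norm_eq_abs, abs_of_pos (by linarith)]
      exact inv_le_one_of_one_le₀ hNc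
    have htnorm : ‖t‖ = ((N : ℝ) * c)⁻¹ := by
      rw [ht, norm_inv, Complex.norm_real, Real.norm_eq_abs, abs_of_pos (by linarith)]
    have hrecon : (N • (t • ((c:ℂ) • η))) = η := by
      rw [smul_smul, ← Nat.cast_smul_eq_nsmul ℂ, smul_smul]
      have hsc : (N:ℂ) * (t * (c:ℂ)) = 1 := by
        rw [ht]
        push_cast
        field_simp
        rw [div_self (by exact_mod_cast hNC0)]
      rw [hsc, one_smul]
    have hbound := demi_iter hM hf (ξ' - η) ((c:ℂ) • η) hcV t htn N
    rw [hrecon, sub_add_cancel] at hbound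
    -- the far part is killed by f
    have hfar : f (ξ' - η) = 0 := by
      have hsubval : ((ξ' - η : CInfOn n Ω) : Rn n → ℂ) =
          fun z => (ξ' : Rn n → ℂ) z - (η : Rn n → ℂ) z := rfl
      have hsub : tsupport ((ξ' - η : CInfOn n Ω) : Rn n → ℂ) ⊆
          K' ∩ {z : Rn n | ε ≤ infDist z F₀} := by
        apply closure_minimal _ ((isClosed_tsupport _).inter
          (isClosed_le continuous_const (continuous_infDist_pt _)))
        intro z hz
        have hzne : (ξ' : Rn n → ℂ) z - (η : Rn n → ℂ) z ≠ 0 := hz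
        constructor
        · have : (ξ' : Rn n → ℂ) z ≠ 0 := by
            intro h0
            apply hzne
            rw [hηval z, h0, mul_zero, sub_zero]
          exact subset_closure this
        · show ε ≤ infDist z F₀
          by_contra hlt
          apply hzne
          rw [hηval z, hχ1 z (le_of_not_ge hlt)]
          norm_num
      apply vanish_off_support hΩ hM hV hf _
        (hcpt.of_isClosed_subset (isClosed_tsupport _) (hsub.trans inter_subset_left))
        ((hsub.trans inter_subset_left).trans hsupΩ)
      intro x hx hxf
      have h1 := hsub hx
      have hxF₀ : x ∈ F₀ := ⟨hxf, h1.1⟩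
      have h2 : infDist x F₀ = 0 := infDist_zero_of_mem hxF₀
      have h3 : ε ≤ infDist x F₀ := h1.2
      rw [h2] at h3
      linarith
    rw [hfar, sub_zero] at hbound
    -- conclude the estimate
    calc ‖f ξ'‖ ≤ N * (M * (‖t‖ * ‖f ((c:ℂ) • η)‖)) := hbound
      _ ≤ N * (M * (((N : ℝ) * c)⁻¹ * (C * ((k+1) * (c * (P * ε)))))) := by
          rw [htnorm]
          apply mul_le_mul_of_nonneg_left _ (Nat.cast_nonneg _)
          apply mul_le_mul_of_nonneg_left _ (by linarith)
          exact mul_le_mul_of_nonneg_left hfc (by positivity)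
      _ = (N * ((N : ℝ) * c)⁻¹ * c) * (M * (C * ((k+1) * (P * ε)))) := by ring
      _ = Q * ε := by
          have hNne : (N:ℝ) ≠ 0 := by
            intro h0
            rw [h0, zero_mul] at hNc
            linarith
          have : (N : ℝ) * ((N : ℝ) * c)⁻¹ * c = 1 := by
            field_simp
          rw [this, one_mul, hQ]
          ring
  -- conclude f ξ' = 0 from the arbitrarily small estimate
  by_contra hne
  have hpos : 0 < ‖f ξ'‖ := norm_pos_iff.2 hne
  set ε := min 1 (min (δ₀/3) (‖f ξ'‖/(2*(Q+1)))) with hε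
  have hεpos : 0 < ε := by
    apply lt_min one_pos
    apply lt_min (by linarith)
    positivity
  have h1 : ε ≤ 1 := min_le_left _ _
  have h2 : 3 * ε ≤ δ₀ := by
    have : ε ≤ δ₀/3 := le_trans (min_le_right _ _) (min_le_left _ _)
    linarith
  have h3 : ε ≤ ‖f ξ'‖/(2*(Q+1)) := le_trans (min_le_right _ _) (min_le_right _ _)
  have h4 := key ε hεpos h1 h2
  have h5 : Q * ε ≤ Q * (‖f ξ'‖/(2*(Q+1))) := mul_le_mul_of_nonneg_left h3 hQ0
  have h6 : Q * (‖f ξ'‖/(2*(Q+1))) < ‖f ξ'‖ := by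
    have hlt : Q / (2*(Q+1)) < 1 := by
      rw [div_lt_one (by linarith : (0:ℝ) < 2*(Q+1))]
      linarith
    calc Q * (‖f ξ'‖/(2*(Q+1))) = (Q/(2*(Q+1))) * ‖f ξ'‖ := by ring
      _ < 1 * ‖f ξ'‖ := mul_lt_mul_of_pos_right hlt hpos
      _ = ‖f ξ'‖ := one_mul _
  linarith
end
/-- if `f ∈ C^∞(Ω)^{[γ,V]}` (`γ t = M·t`, `M ≥ 1`) is of order `≤ k` and all
derivatives of `ξ` of order `≤ k` vanish on `supp f`, then `f ξ = 0`. -/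
theorem stmt17 (n : ℕ) (Ω : Set (Rn n)) (hΩ : IsOpen Ω) (hne : Ω.Nonempty)
    (M : ℝ) (hM : 1 ≤ M)
    (V : Set (CInfOn n Ω)) (hV : V ∈ 𝓝 (0 : CInfOn n Ω))
    (f : CInfOn n Ω → ℂ) (hf : DemiK (fun t : ℂ => (M : ℂ) * t) V f)
    (hc : Continuous f) (k : ℕ)
    (horder : ∀ K : Set (Rn n), IsCompact K → K ⊆ Ω → ∃ C > 0,
      ∀ ξ : CInfOn n Ω, suppFun Ω ξ.val ⊆ K → ‖f ξ‖ ≤ C * pnorm Ω K k ξ.val)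
    (ξ : CInfOn n Ω)
    (hξ : ∀ i ≤ k, ∀ x ∈ fsupp Ω Subtype.val f,
      iteratedFDerivWithin ℝ i ξ.val Ω x = 0) :
    f ξ = 0 := by
  classical
  have hsmall : ∀ δ : ℝ, 0 < δ → ‖f ξ‖ < δ := by
    intro δ hδpos
    have hW : f ⁻¹' (Metric.ball (f ξ) δ) ∈ 𝓝 ξ :=
      hc.continuousAt.preimage_mem_nhds (Metric.ball_mem_nhds _ hδpos)
    obtain ⟨K, hKc, hKΩ, m, ε, hε, hmem⟩ := nhd_basis ξ hW
    by_cases hKne : K.Nonempty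
    case neg =>
      have h0 : (0 : CInfOn n Ω) ∈ f ⁻¹' (Metric.ball (f ξ) δ) := by
        apply hmem
        intro i hi x hx
        exact absurd ⟨x, hx⟩ hKne
      rw [Set.mem_preimage, Metric.mem_ball, hf.1, dist_eq_norm, zero_sub, norm_neg] at h0
      exact h0
    case pos =>
      obtain ⟨δ', hδ'pos, hthick⟩ := hKc.exists_thickening_subset_open hΩ hKΩ
      set ε' := δ'/4 with hε'
      have hε'pos : 0 < ε' := by rw [hε']; linarith
      obtain ⟨I₀, hI₀, hwhit⟩ := whitney n 0
      obtain ⟨χ, hχc, hχ1, hχ0, _⟩ := hwhit K ε' hε'pos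
      have hχℂ : ContDiffOn ℝ ((⊤:ℕ∞) : WithTop ℕ∞) (fun x : Rn n => ((χ x : ℝ) : ℂ)) Ω :=
        (Complex.ofRealCLM.contDiff.comp hχc).contDiffOn
      set ξ'' : CInfOn n Ω := ⟨fun x => ((χ x : ℝ) : ℂ) * (ξ : Rn n → ℂ) x,
        ⟨hχℂ.mul ξ.2.1, fun x hx => by
          show ((χ x : ℝ) : ℂ) * (ξ : Rn n → ℂ) x = 0
          rw [ξ.2.2 x hx, mul_zero]⟩⟩ with hξ''
      have hξ''val : ∀ z, (ξ'' : Rn n → ℂ) z = ((χ z : ℝ) : ℂ) * (ξ : Rn n → ℂ) z :=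
        fun z => rfl
      -- support control
      set K₄ := {z : Rn n | Metric.infDist z K ≤ 3*ε'} with hK₄
      have hsupsub : tsupport (ξ'' : Rn n → ℂ) ⊆ K₄ := by
        apply closure_minimal _ (isClosed_le (Metric.continuous_infDist_pt _) continuous_const)
        intro z hz
        show Metric.infDist z K ≤ 3*ε'
        by_contra hlt
        apply hz
        rw [hξ''val z, hχ0 z (le_of_lt (not_le.1 hlt))]
        norm_num
      have hK₄Ω : K₄ ⊆ Ω := by
        intro z hz
        apply hthick
        rw [Metric.mem_thickening_iff]
        obtain ⟨y, hy, hdy⟩ := hKc.exists_infDist_eq_dist hKne z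
        refine ⟨y, hy, ?_⟩
        rw [← hdy]
        calc Metric.infDist z K ≤ 3*ε' := hz
          _ < δ' := by rw [hε']; linarith
      have hK₄cpt : IsCompact K₄ := by
        obtain ⟨R, hR⟩ := hKc.isBounded.subset_closedBall (0 : Rn n)
        apply (isCompact_closedBall (0 : Rn n) (R + 3*ε')).of_isClosed_subset
          (isClosed_le (Metric.continuous_infDist_pt _) continuous_const)
        intro x hx
        obtain ⟨y, hy, hdy⟩ := hKc.exists_infDist_eq_dist hKne x
        have h1 : dist x y ≤ 3*ε' := by rw [← hdy]; exact hx
        have h2 : dist y (0 : Rn n) ≤ R := hR hy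
        rw [Metric.mem_closedBall]
        calc dist x 0 ≤ dist x y + dist y 0 := dist_triangle _ _ _
          _ ≤ 3*ε' + R := add_le_add h1 h2
          _ = R + 3*ε' := by ring
      have hcpt'' : IsCompact (tsupport (ξ'' : Rn n → ℂ)) :=
        hK₄cpt.of_isClosed_subset (isClosed_tsupport _) hsupsub
      have hsupΩ'' : tsupport (ξ'' : Rn n → ℂ) ⊆ Ω := hsupsub.trans hK₄Ω
      -- ξ'' is close to ξ
      have hmemW : ξ'' ∈ f ⁻¹' (Metric.ball (f ξ) δ) := by
        apply hmem
        intro i hi x hx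
        have hxΩ : x ∈ Ω := hKΩ hx
        have hO : {z : Rn n | Metric.infDist z K < ε'} ∈ 𝓝 x := by
          apply (isOpen_lt (Metric.continuous_infDist_pt _) continuous_const).mem_nhds
          show Metric.infDist x K < ε'
          rw [Metric.infDist_zero_of_mem hx]
          exact hε'pos
        have hev : (ξ'' : Rn n → ℂ) =ᶠ[𝓝[Ω] x] (ξ : Rn n → ℂ) := by
          apply Filter.mem_of_superset (nhdsWithin_le_nhds hO)
          intro z hz
          show (ξ'' : Rn n → ℂ) z = (ξ : Rn n → ℂ) z
          rw [hξ''val z, hχ1 z (le_of_lt hz)]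
          norm_num
        have hx0 : (ξ'' : Rn n → ℂ) x = (ξ : Rn n → ℂ) x := by
          rw [hξ''val x, hχ1 x ?_]
          · norm_num
          · rw [Metric.infDist_zero_of_mem hx]
            exact hε'pos.le
        rw [hev.iteratedFDerivWithin_eq hx0 i, sub_self, norm_zero]
        exact hε.le
      -- all derivatives of ξ'' up to order k vanish on supp f
      have hzero'' : ∀ i ≤ k, ∀ y ∈ fsupp Ω Subtype.val f,
          iteratedFDerivWithin ℝ i (ξ'' : Rn n → ℂ) Ω y = 0 := by
        intro i hi y hy
        exact prod_deriv_zero hΩ χ hχc (ξ : Rn n → ℂ) ξ.2.1 hy.1 i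
          (fun j hj => hξ j (hj.trans hi) y hy)
      have hfz : f ξ'' = 0 :=
        main_compact hΩ hM hV hf k horder ξ'' hcpt'' hsupΩ'' hzero''
      rw [Set.mem_preimage, Metric.mem_ball, hfz, dist_eq_norm, zero_sub, norm_neg] at hmemW
      exact hmemW
  by_contra hne
  exact absurd (hsmall ‖f ξ‖ (norm_pos_iff.2 hne)) (lt_irrefl _)
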